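/- Let a single UAV route visit tasks s_1, …, s_k in order, starting and ending at the depot d, with nonnegative travel times c satisfying the triangle inequality. If the cycle length L is at most the revisit period limit R of the m-th visited task s_m, then the return time from s_m to the depot satisfies r_m ≤ R − c(d, s_m). (Validity of the strengthened inequality w_{ij} ≤ (R_i − c_{di}) x_{ij} in Proposition 1.) -/

import Mathlib

lemma chain_bound {Loc : Type*} (c : Loc → Loc → ℝ) (hc : ∀ x y, 0 ≤ c x y)
    (htri : ∀ x y z, c x z ≤ c x y + c y z) (s : ℕ → Loc) :
    ∀ n : ℕ, c (s 0) (s (n + 1)) ≤ ∑ l ∈ Finset.range (n + 1), c (s l) (s (l + 1)) := by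
  intro n
  induction n with
  | zero => simp
  | succ n ih =>
      rw [Finset.sum_range_succ]
      calc c (s 0) (s (n+2)) ≤ c (s 0) (s (n+1)) + c (s (n+1)) (s (n+2)) := htri _ _ _
        _ ≤ _ := by linarith

/-- A single UAV route visits tasks `s 1, …, s k` in order, starting
and ending at the depot `d` (`s 0 = s (k+1) = d`), with nonnegative travel times `c`
satisfying the triangle inequality.  If the cycle length
`L = ∑_{l=0}^{k} c (s l) (s (l+1))` is at most the revisit period limit `R` of the
m-th visited task `s m`, then the return time
`r m = ∑_{l=m}^{k} c (s l) (s (l + 1))` satisfies `r m ≤ R − c d (s m)`. -/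
theorem return_time_upper_bound
    {Loc : Type*} (c : Loc → Loc → ℝ) (hc : ∀ x y, 0 ≤ c x y)
    (htri : ∀ x y z, c x z ≤ c x y + c y z)
    (d : Loc) (k : ℕ) (s : ℕ → Loc)
    (hs0 : s 0 = d) (hsk : s (k + 1) = d)
    (m : ℕ) (hm1 : 1 ≤ m) (hmk : m ≤ k) (R : ℝ)
    (hL : (∑ l ∈ Finset.range (k + 1), c (s l) (s (l + 1))) ≤ R) :
    (∑ l ∈ Finset.Icc m k, c (s l) (s (l + 1))) ≤ R - c d (s m) := by
  have hsplit : (∑ l ∈ Finset.range m, c (s l) (s (l + 1)))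
      + (∑ l ∈ Finset.Icc m k, c (s l) (s (l + 1)))
      = ∑ l ∈ Finset.range (k + 1), c (s l) (s (l + 1)) := by
    rw [show Finset.Icc m k = Finset.Ico m (k + 1) by rw [Finset.Ico_add_one_right_eq_Icc],
      Finset.range_eq_Ico, Finset.range_eq_Ico,
      ← Finset.sum_Ico_consecutive _ (Nat.zero_le m) (by omega : m ≤ k + 1)]
  obtain ⟨m', rfl⟩ : ∃ m', m = m' + 1 := ⟨m - 1, by omega⟩
  have hchain := chain_bound c hc htri s m'
  rw [hs0] at hchain
  linarith
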